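/- Let p be an evenlevel(v) or oddlevel(v) path (a minimum length alternating path of the appropriate parity from an unmatched vertex f to v), and let u lie on p with tenacity(u) >= tenacity(v). Then u is BFS-honest with respect to p, i.e., the length of the prefix p[f to u] equals evenlevel(u) if this length is even, and equals oddlevel(u) if this length is odd. -/

import Mathlib

open scoped Classical

universe u

variable {V : Type u}

/-- A finite-or-infinite undirected graph together with a matching. -/
structure MatchedGraph (V : Type u) where
  adj : V → V → Prop
  symm : ∀ u v, adj u v → adj v u
  loopless : ∀ v, ¬ adj v v
  M : V → V → Prop
  M_symm : ∀ u v, M u v → M v u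
  M_sub : ∀ u v, M u v → adj u v
  M_matching : ∀ u v w, M u v → M u w → v = w

namespace MatchedGraph

/-- A vertex is unmatched if no matched edge is incident to it. -/
def unmatched (g : MatchedGraph V) (v : V) : Prop := ∀ u, ¬ g.M v u

/-- `p` is a simple alternating path starting at `b` and ending at `v`,
whose first edge is unmatched and whose edges alternate unmatched/matched.
(The `i`-th edge is matched iff `i` is odd.) -/
def AltPath (g : MatchedGraph V) (p : List V) (b v : V) : Prop :=
  p.head? = some b ∧ p.getLast? = some v ∧ p.Nodup ∧
  ∀ i, i + 1 < p.length →
    g.adj (p.getD i b) (p.getD (i + 1) b) ∧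
      (g.M (p.getD i b) (p.getD (i + 1) b) ↔ i % 2 = 1)

/-- An alternating path from an *unmatched* vertex `f` to `v`. -/
def AltPathFrom (g : MatchedGraph V) (p : List V) (f v : V) : Prop :=
  g.unmatched f ∧ g.AltPath p f v

/-- Minimum length of an even alternating path from an unmatched vertex to `v`. -/
noncomputable def evenlevel (g : MatchedGraph V) (v : V) : ℕ∞ :=
  sInf {n : ℕ∞ | ∃ p f, g.AltPathFrom p f v ∧ Even (p.length - 1) ∧
    n = ((p.length - 1 : ℕ) : ℕ∞)}

/-- Minimum length of an odd alternating path from an unmatched vertex to `v`. -/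
noncomputable def oddlevel (g : MatchedGraph V) (v : V) : ℕ∞ :=
  sInf {n : ℕ∞ | ∃ p f, g.AltPathFrom p f v ∧ Odd (p.length - 1) ∧
    n = ((p.length - 1 : ℕ) : ℕ∞)}

noncomputable def tenacity (g : MatchedGraph V) (v : V) : ℕ∞ :=
  g.evenlevel v + g.oddlevel v

noncomputable def minlevel (g : MatchedGraph V) (v : V) : ℕ∞ :=
  min (g.evenlevel v) (g.oddlevel v)

noncomputable def maxlevel (g : MatchedGraph V) (v : V) : ℕ∞ :=
  max (g.evenlevel v) (g.oddlevel v)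

/-- Minimum length of an augmenting path: an alternating path between two
distinct unmatched vertices. -/
noncomputable def lm (g : MatchedGraph V) : ℕ∞ :=
  sInf {n : ℕ∞ | ∃ p f v, g.AltPathFrom p f v ∧ g.unmatched v ∧ f ≠ v ∧
    n = ((p.length - 1 : ℕ) : ℕ∞)}

/-- Minimum tenacity of any vertex. -/
noncomputable def tm (g : MatchedGraph V) : ℕ∞ := ⨅ v, g.tenacity v

/-- `p` is an `evenlevel(v)` path starting at the unmatched vertex `f`. -/
def IsEvenlevelPath (g : MatchedGraph V) (p : List V) (f v : V) : Prop :=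
  g.AltPathFrom p f v ∧ Even (p.length - 1) ∧
    ((p.length - 1 : ℕ) : ℕ∞) = g.evenlevel v

/-- `p` is an `oddlevel(v)` path starting at the unmatched vertex `f`. -/
def IsOddlevelPath (g : MatchedGraph V) (p : List V) (f v : V) : Prop :=
  g.AltPathFrom p f v ∧ Odd (p.length - 1) ∧
    ((p.length - 1 : ℕ) : ℕ∞) = g.oddlevel v

/-- `p` is a `minlevel(v)` path starting at the unmatched vertex `f`. -/
def IsMinlevelPath (g : MatchedGraph V) (p : List V) (f v : V) : Prop :=
  g.AltPathFrom p f v ∧ ((p.length - 1 : ℕ) : ℕ∞) = g.minlevel v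

/-- `p` is a `maxlevel(v)` path starting at the unmatched vertex `f`. -/
def IsMaxlevelPath (g : MatchedGraph V) (p : List V) (f v : V) : Prop :=
  g.AltPathFrom p f v ∧ ((p.length - 1 : ℕ) : ℕ∞) = g.maxlevel v

/-- The vertex at position `i` of `p` (whose prefix from `f` has length `i`)
is BFS-honest w.r.t. `p`. -/
def BFSHonest (g : MatchedGraph V) (p : List V) (f : V) (i : ℕ) : Prop :=
  (Even i → g.evenlevel (p.getD i f) = (i : ℕ∞)) ∧
  (Odd i → g.oddlevel (p.getD i f) = (i : ℕ∞))

/-- `u` is a predecessor of `v`: `(u, v)` is the last edge of some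
`minlevel(v)` path. -/
def IsPred (g : MatchedGraph V) (u v : V) : Prop :=
  ∃ p f, g.IsMinlevelPath p f v ∧ 2 ≤ p.length ∧ p.getD (p.length - 2) f = u

/-- A prop is an edge which is the last edge of a minlevel path to one of its
endpoints. -/
def IsPropEdge (g : MatchedGraph V) (u v : V) : Prop :=
  g.IsPred u v ∨ g.IsPred v u

/-- A bridge is an edge that is not a prop. -/
def IsBridge (g : MatchedGraph V) (u v : V) : Prop :=
  g.adj u v ∧ ¬ g.IsPropEdge u v

/-- Tenacity of an edge. -/
noncomputable def etenacity (g : MatchedGraph V) (u v : V) : ℕ∞ :=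
  if g.M u v then g.oddlevel u + g.oddlevel v + 1
  else g.evenlevel u + g.evenlevel v + 1

/-- The set `B(v)` of all `F(p, v)`: for each `evenlevel(v)` or `oddlevel(v)`
path `p`, the vertex on `p` farthest from the unmatched endpoint among the
vertices of tenacity greater than `tenacity(v)`. -/
def Bset (g : MatchedGraph V) (v : V) : Set V :=
  {b | ∃ p f i, (g.IsEvenlevelPath p f v ∨ g.IsOddlevelPath p f v) ∧
    i < p.length ∧ b = p.getD i f ∧ g.tenacity v < g.tenacity b ∧
    ∀ k, i < k → k < p.length → g.tenacity (p.getD k f) ≤ g.tenacity v}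

/-- `b` is the (unique) base of `v`. -/
def baseOf (g : MatchedGraph V) (v b : V) : Prop := g.Bset v = {b}

/-- Iterated bases: `iterBase k v b` means `b = base^k(v)` (with `base^0(v) = v`). -/
def iterBase (g : MatchedGraph V) : ℕ → V → V → Prop
  | 0, v, b => v = b
  | k + 1, v, b => ∃ u, g.iterBase k v u ∧ g.baseOf u b

/-- A vertex is outer if `evenlevel(v) < oddlevel(v)`. -/
def IsOuter (g : MatchedGraph V) (v : V) : Prop := g.evenlevel v < g.oddlevel v

/-- A vertex is inner if it is not outer. -/
def IsInner (g : MatchedGraph V) (v : V) : Prop := g.oddlevel v ≤ g.evenlevel v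

/-- The set `S_{b,t}` of vertices of tenacity `t` with base `b`. -/
def Sset (g : MatchedGraph V) (t : ℕ) (b : V) : Set V :=
  {v | g.tenacity v = (t : ℕ∞) ∧ g.baseOf v b}

/-- The blossom `B_{b,t}`, defined recursively. -/
def blossom (g : MatchedGraph V) : ℕ → V → Set V
  | 0, _ => ∅
  | 1, _ => ∅
  | t + 2, b => g.Sset (t + 2) b ∪
      ⋃ v ∈ {v | (v ∈ g.Sset (t + 2) b ∨ v = b) ∧ g.IsOuter v}, blossom g t v

/-- The nesting depth `N(B_{b,t})` of a blossom. -/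
noncomputable def ndepth (g : MatchedGraph V) [Fintype V] : ℕ → V → ℕ
  | 0, _ => 0
  | 1, _ => 0
  | t + 2, b =>
    if (g.Sset (t + 2) b).Nonempty then
      1 + Finset.univ.sup (fun v =>
        if (v ∈ g.Sset (t + 2) b ∨ v = b) ∧ g.IsOuter v then ndepth g t v else 0)
    else ndepth g t b

/-- `evenlevel(b; v)`: minimum even length of an alternating path from `b` to
`v` starting with an unmatched edge. -/
noncomputable def evenlevelFrom (g : MatchedGraph V) (b v : V) : ℕ∞ :=
  sInf {n : ℕ∞ | ∃ p, g.AltPath p b v ∧ Even (p.length - 1) ∧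
    n = ((p.length - 1 : ℕ) : ℕ∞)}

/-- `oddlevel(b; v)`: minimum odd length of an alternating path from `b` to
`v` starting with an unmatched edge. -/
noncomputable def oddlevelFrom (g : MatchedGraph V) (b v : V) : ℕ∞ :=
  sInf {n : ℕ∞ | ∃ p, g.AltPath p b v ∧ Odd (p.length - 1) ∧
    n = ((p.length - 1 : ℕ) : ℕ∞)}

end MatchedGraph


namespace MatchedGraph

-- ==================== helpers ====================

lemma AltPath.length_pos {g : MatchedGraph V} {p : List V} {b v : V}
    (h : g.AltPath p b v) : 0 < p.length := by
  cases p with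
  | nil => exact absurd h.1 (by simp)
  | cons a l => simp

lemma AltPath.getD_head {g : MatchedGraph V} {p : List V} {b v : V}
    (h : g.AltPath p b v) : p.getD 0 b = b := by
  have h0 := h.1
  have hl : 0 < p.length := h.length_pos
  rw [List.head?_eq_getElem?, List.getElem?_eq_getElem hl] at h0
  rw [List.getD_eq_getElem p b hl]
  exact Option.some_injective _ h0

lemma AltPath.getD_last {g : MatchedGraph V} {p : List V} {b v : V}
    (h : g.AltPath p b v) : p.getD (p.length - 1) b = v := by
  have h0 := h.2.1
  have hl : p.length - 1 < p.length := by have := h.length_pos; omega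
  rw [List.getLast?_eq_getElem?, List.getElem?_eq_getElem hl] at h0
  rw [List.getD_eq_getElem p b hl]
  exact Option.some_injective _ h0

lemma AltPath.getD_inj {g : MatchedGraph V} {p : List V} {b v : V}
    (h : g.AltPath p b v) {s t : ℕ} (hs : s < p.length) (ht : t < p.length)
    (he : p.getD s b = p.getD t b) : s = t := by
  rw [List.getD_eq_getElem p b hs, List.getD_eq_getElem p b ht] at he
  exact (List.Nodup.getElem_inj_iff h.2.2.1).mp he

lemma exists_nat_of_ne_top {x : ℕ∞} (h : x ≠ ⊤) : ∃ n : ℕ, x = (n : ℕ∞) := by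
  lift x to ℕ using h; exact ⟨x, rfl⟩

noncomputable def lv (g : MatchedGraph V) (r : ℕ) (v : V) : ℕ∞ :=
  if r % 2 = 1 then g.oddlevel v else g.evenlevel v

lemma lv_odd (g : MatchedGraph V) {r : ℕ} (h : r % 2 = 1) (v : V) :
    g.lv r v = g.oddlevel v := if_pos h

lemma lv_even (g : MatchedGraph V) {r : ℕ} (h : r % 2 = 0) (v : V) :
    g.lv r v = g.evenlevel v := if_neg (by omega)

lemma lv_congr (g : MatchedGraph V) {r s : ℕ} (h : r % 2 = s % 2) (v : V) :
    g.lv r v = g.lv s v := by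
  by_cases h1 : r % 2 = 1
  · rw [g.lv_odd h1 v, g.lv_odd (by omega) v]
  · rw [g.lv_even (by omega) v, g.lv_even (by omega) v]

lemma tenacity_lv (g : MatchedGraph V) (r : ℕ) (v : V) :
    g.tenacity v = g.lv r v + g.lv (r + 1) v := by
  by_cases h : r % 2 = 1
  · rw [g.lv_odd h v, g.lv_even (by omega) v, add_comm]; rfl
  · rw [g.lv_even (by omega) v, g.lv_odd (by omega) v]; rfl

lemma lv_le (g : MatchedGraph V) {p : List V} {f v : V} (h : g.AltPathFrom p f v) :
    g.lv (p.length - 1) v ≤ ((p.length - 1 : ℕ) : ℕ∞) := by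
  by_cases hpar : (p.length - 1) % 2 = 1
  · rw [g.lv_odd hpar v]
    exact sInf_le ⟨p, f, h, Nat.odd_iff.mpr hpar, rfl⟩
  · rw [g.lv_even (by omega) v]
    exact sInf_le ⟨p, f, h, Nat.even_iff.mpr (by omega), rfl⟩

lemma lv_attained (g : MatchedGraph V) {r : ℕ} {v : V} {n : ℕ}
    (h : g.lv r v = (n : ℕ∞)) :
    ∃ q f1, g.AltPathFrom q f1 v ∧ q.length - 1 = n ∧ n % 2 = r % 2 := by
  by_cases hpar : r % 2 = 1
  · rw [g.lv_odd hpar v] at h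
    have hne : {x : ℕ∞ | ∃ p f, g.AltPathFrom p f v ∧ Odd (p.length - 1) ∧
        x = ((p.length - 1 : ℕ) : ℕ∞)}.Nonempty := by
      by_contra hc
      rw [Set.not_nonempty_iff_eq_empty] at hc
      have h2 : g.oddlevel v = ⊤ := by rw [oddlevel, hc, sInf_empty]
      rw [h2] at h
      exact (WithTop.coe_ne_top (a := n)) h.symm
    have h' : sInf {x : ℕ∞ | ∃ p f, g.AltPathFrom p f v ∧ Odd (p.length - 1) ∧
        x = ((p.length - 1 : ℕ) : ℕ∞)} = (n : ℕ∞) := h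
    have hmem := h' ▸ csInf_mem hne
    obtain ⟨q, f1, hq, hodd, heq⟩ := hmem
    have hlen : q.length - 1 = n := by exact_mod_cast heq.symm
    refine ⟨q, f1, hq, hlen, ?_⟩
    rw [Nat.odd_iff] at hodd; omega
  · rw [g.lv_even (by omega) v] at h
    have hne : {x : ℕ∞ | ∃ p f, g.AltPathFrom p f v ∧ Even (p.length - 1) ∧
        x = ((p.length - 1 : ℕ) : ℕ∞)}.Nonempty := by
      by_contra hc
      rw [Set.not_nonempty_iff_eq_empty] at hc
      have h2 : g.evenlevel v = ⊤ := by rw [evenlevel, hc, sInf_empty]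
      rw [h2] at h
      exact (WithTop.coe_ne_top (a := n)) h.symm
    have h' : sInf {x : ℕ∞ | ∃ p f, g.AltPathFrom p f v ∧ Even (p.length - 1) ∧
        x = ((p.length - 1 : ℕ) : ℕ∞)} = (n : ℕ∞) := h
    have hmem := h' ▸ csInf_mem hne
    obtain ⟨q, f1, hq, hev, heq⟩ := hmem
    have hlen : q.length - 1 = n := by exact_mod_cast heq.symm
    refine ⟨q, f1, hq, hlen, ?_⟩
    rw [Nat.even_iff] at hev; omega

lemma lv_le_of_fn (g : MatchedGraph V) (φ : ℕ → V) (n : ℕ)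
    (hunm : g.unmatched (φ 0))
    (hinj : ∀ s t, s ≤ n → t ≤ n → φ s = φ t → s = t)
    (hadj : ∀ t, t < n → g.adj (φ t) (φ (t + 1)))
    (hM : ∀ t, t < n → (g.M (φ t) (φ (t + 1)) ↔ t % 2 = 1)) :
    g.lv n (φ n) ≤ (n : ℕ∞) := by
  set c : List V := (List.range (n + 1)).map φ with hc
  have hlen : c.length = n + 1 := by simp [hc]
  have hget : ∀ t, t < c.length → c.getD t (φ 0) = φ t := by
    intro t htl
    rw [List.getD_eq_getElem c (φ 0) htl]
    have htn : t < n + 1 := by omega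
    simp [hc]
  have hpath : g.AltPath c (φ 0) (φ n) := by
    refine ⟨?_, ?_, ?_, ?_⟩
    · rw [List.head?_eq_getElem?, List.getElem?_eq_getElem (by omega : 0 < c.length)]
      have := hget 0 (by omega)
      rw [List.getD_eq_getElem c (φ 0) (by omega)] at this
      rw [this]
    · rw [List.getLast?_eq_getElem?, List.getElem?_eq_getElem (by omega : c.length - 1 < c.length)]
      have h2 : c.length - 1 < c.length := by omega
      have := hget (c.length - 1) h2
      rw [List.getD_eq_getElem c (φ 0) h2] at this
      rw [this, hlen]
      norm_num
    · refine List.Nodup.map_on ?_ List.nodup_range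
      intro x hx y hy hxy
      rw [List.mem_range] at hx hy
      exact hinj x y (by omega) (by omega) hxy
    · intro t htl
      rw [hget t (by omega), hget (t + 1) (by omega)]
      rw [hlen] at htl
      exact ⟨hadj t (by omega), hM t (by omega)⟩
  have h2 := g.lv_le ⟨hunm, hpath⟩
  rw [hlen] at h2
  simpa using h2

lemma splice_up (g : MatchedGraph V) {p q : List V} {f f1 v w : V}
    (hp : g.AltPath p f v) (hq : g.AltPathFrom q f1 w)
    {a j e : ℕ} (ha : a < q.length) (hje : j ≤ e) (he : e < p.length)
    (haj : q.getD a f1 = p.getD j f)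
    (hpar : a % 2 = j % 2)
    (hdis : ∀ s k, s ≤ a → j < k → k ≤ e → q.getD s f1 ≠ p.getD k f) :
    g.lv (a + (e - j)) (p.getD e f) ≤ ((a + (e - j) : ℕ) : ℕ∞) := by
  set n := a + (e - j) with hn
  set φ : ℕ → V := fun t => if t ≤ a then q.getD t f1 else p.getD (j + (t - a)) f with hφ
  have hφq : ∀ t, t ≤ a → φ t = q.getD t f1 := by
    intro t htt; simp only [hφ]; rw [if_pos htt]
  have hφp : ∀ t, a < t → φ t = p.getD (j + (t - a)) f := by
    intro t htt; simp only [hφ]; rw [if_neg (by omega)]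
  have hφ0 : φ 0 = f1 := by rw [hφq 0 (by omega)]; exact hq.2.getD_head
  have hφn : φ n = p.getD e f := by
    rcases Nat.lt_or_ge a n with h1 | h1
    · rw [hφp n h1]; congr 1; omega
    · have h2 : n = a := by omega
      have h3 : e = j := by omega
      rw [h2, hφq a le_rfl, haj, h3]
  have hinj : ∀ s t, s ≤ n → t ≤ n → φ s = φ t → s = t := by
    intro s t hs htt he'
    rcases le_or_gt s a with h1 | h1 <;> rcases le_or_gt t a with h2 | h2
    · rw [hφq s h1, hφq t h2] at he'
      exact hq.2.getD_inj (by omega) (by omega) he'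
    · rw [hφq s h1, hφp t h2] at he'
      exact absurd he' (hdis s (j + (t - a)) h1 (by omega) (by omega))
    · rw [hφp s h1, hφq t h2] at he'
      exact absurd he'.symm (hdis t (j + (s - a)) h2 (by omega) (by omega))
    · rw [hφp s h1, hφp t h2] at he'
      have := hp.getD_inj (s := j + (s - a)) (t := j + (t - a)) (by omega) (by omega) he'
      omega
  have key : ∀ t, t < n → g.adj (φ t) (φ (t + 1)) ∧ (g.M (φ t) (φ (t + 1)) ↔ t % 2 = 1) := by
    intro t htn
    rcases lt_trichotomy t a with h1 | rfl | h1
    · rw [hφq t (by omega), hφq (t + 1) (by omega)]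
      exact hq.2.2.2.2 t (by omega)
    · rw [hφq t le_rfl, haj, hφp (t + 1) (by omega), show j + (t + 1 - t) = j + 1 by omega]
      have hedge := hp.2.2.2 j (by omega)
      exact ⟨hedge.1, by rw [hedge.2]; omega⟩
    · rw [hφp t (by omega), hφp (t + 1) (by omega), show j + (t + 1 - a) = j + (t - a) + 1 by omega]
      have hedge := hp.2.2.2 (j + (t - a)) (by omega)
      exact ⟨hedge.1, by rw [hedge.2]; omega⟩
  have h2 := g.lv_le_of_fn φ n (by rw [hφ0]; exact hq.1) hinj
    (fun t htn => (key t htn).1) (fun t htn => (key t htn).2)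
  rw [hφn] at h2
  exact h2

lemma splice_down (g : MatchedGraph V) {p q : List V} {f f1 v w : V}
    (hp : g.AltPath p f v) (hq : g.AltPathFrom q f1 w)
    {a j e : ℕ} (ha : a < q.length) (hej : e ≤ j) (hjp : j < p.length)
    (haj : q.getD a f1 = p.getD j f)
    (hpar : a % 2 = (j + 1) % 2)
    (hdis : ∀ s k, s ≤ a → e ≤ k → k < j → q.getD s f1 ≠ p.getD k f) :
    g.lv (a + (j - e)) (p.getD e f) ≤ ((a + (j - e) : ℕ) : ℕ∞) := by
  set n := a + (j - e) with hn
  set φ : ℕ → V := fun t => if t ≤ a then q.getD t f1 else p.getD (j - (t - a)) f with hφ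
  have hφq : ∀ t, t ≤ a → φ t = q.getD t f1 := by
    intro t htt; simp only [hφ]; rw [if_pos htt]
  have hφp : ∀ t, a < t → φ t = p.getD (j - (t - a)) f := by
    intro t htt; simp only [hφ]; rw [if_neg (by omega)]
  have hφ0 : φ 0 = f1 := by rw [hφq 0 (by omega)]; exact hq.2.getD_head
  have hφn : φ n = p.getD e f := by
    rcases Nat.lt_or_ge a n with h1 | h1
    · rw [hφp n h1]; congr 1; omega
    · have h2 : n = a := by omega
      have h3 : e = j := by omega
      rw [h2, hφq a le_rfl, haj, h3]
  have hMiff : ∀ x y : V, g.M x y ↔ g.M y x := fun x y => ⟨g.M_symm x y, g.M_symm y x⟩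
  have hinj : ∀ s t, s ≤ n → t ≤ n → φ s = φ t → s = t := by
    intro s t hs htt he'
    rcases le_or_gt s a with h1 | h1 <;> rcases le_or_gt t a with h2 | h2
    · rw [hφq s h1, hφq t h2] at he'
      exact hq.2.getD_inj (by omega) (by omega) he'
    · rw [hφq s h1, hφp t h2] at he'
      exact absurd he' (hdis s (j - (t - a)) h1 (by omega) (by omega))
    · rw [hφp s h1, hφq t h2] at he'
      exact absurd he'.symm (hdis t (j - (s - a)) h2 (by omega) (by omega))
    · rw [hφp s h1, hφp t h2] at he'
      have := hp.getD_inj (s := j - (s - a)) (t := j - (t - a)) (by omega) (by omega) he'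
      omega
  have key : ∀ t, t < n → g.adj (φ t) (φ (t + 1)) ∧ (g.M (φ t) (φ (t + 1)) ↔ t % 2 = 1) := by
    intro t htn
    rcases lt_trichotomy t a with h1 | rfl | h1
    · rw [hφq t (by omega), hφq (t + 1) (by omega)]
      exact hq.2.2.2.2 t (by omega)
    · rw [hφq t le_rfl, haj, hφp (t + 1) (by omega), show j - (t + 1 - t) = j - 1 by omega]
      have hedge := hp.2.2.2 (j - 1) (by omega)
      rw [show j - 1 + 1 = j by omega] at hedge
      refine ⟨g.symm _ _ hedge.1, ?_⟩
      rw [hMiff (p.getD j f) (p.getD (j - 1) f), hedge.2]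
      omega
    · rw [hφp t (by omega), hφp (t + 1) (by omega), show j - (t + 1 - a) = j - (t - a) - 1 by omega]
      have hedge := hp.2.2.2 (j - (t - a) - 1) (by omega)
      rw [show j - (t - a) - 1 + 1 = j - (t - a) by omega] at hedge
      refine ⟨g.symm _ _ hedge.1, ?_⟩
      rw [hMiff (p.getD (j - (t - a)) f) (p.getD (j - (t - a) - 1) f), hedge.2]
      omega
  have h2 := g.lv_le_of_fn φ n (by rw [hφ0]; exact hq.1) hinj
    (fun t htn => (key t htn).1) (fun t htn => (key t htn).2)
  rw [hφn] at h2
  exact h2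

end MatchedGraph

/-- On an `evenlevel(v)` or `oddlevel(v)` path `p`, every vertex
`u` on `p` with `tenacity(u) ≥ tenacity(v)` is BFS-honest w.r.t. `p`. -/
theorem bfsHonest_of_tenacity_ge (g : MatchedGraph V) (p : List V) (f v : V)
    (hp : g.IsEvenlevelPath p f v ∨ g.IsOddlevelPath p f v)
    (i : ℕ) (hi : i < p.length)
    (ht : g.tenacity v ≤ g.tenacity (p.getD i f)) :
    g.BFSHonest p f i := by
  have hpf : g.AltPathFrom p f v := by rcases hp with h | h; exacts [h.1, h.1]
  have hLpos : 0 < p.length := hpf.2.length_pos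
  set L := p.length - 1 with hLdef
  have hplen : p.length = L + 1 := by rw [hLdef]; omega
  have hLlv : ((L : ℕ) : ℕ∞) = g.lv L v := by
    rcases hp with h | h
    · have hpar : L % 2 = 0 := by rw [hLdef]; exact Nat.even_iff.mp h.2.1
      rw [g.lv_even hpar v, hLdef]
      exact h.2.2
    · have hpar : L % 2 = 1 := by rw [hLdef]; exact Nat.odd_iff.mp h.2.1
      rw [g.lv_odd hpar v, hLdef]
      exact h.2.2
  have hlast : p.getD L f = v := by rw [hLdef]; exact hpf.2.getD_last
  -- upper bound: prefix of p
  have hle : g.lv i (p.getD i f) ≤ (i : ℕ∞) := by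
    have := g.splice_up (a := i) (j := i) (e := i) hpf.2 hpf hi le_rfl hi rfl rfl
      (by intro s k _ h1 h2 _; omega)
    simpa using this
  set z := p.getD i f with hz
  -- key equality
  have hkey : g.lv i z = (i : ℕ∞) := by
    by_contra hne
    have hlt : g.lv i z < (i : ℕ∞) := lt_of_le_of_ne hle hne
    have hnetop : g.lv i z ≠ ⊤ := ne_top_of_lt hlt
    obtain ⟨m, hm⟩ := MatchedGraph.exists_nat_of_ne_top hnetop
    have hmi : m < i := by rw [hm] at hlt; exact_mod_cast hlt
    obtain ⟨q, f1, hq, hqlen, hqpar⟩ := g.lv_attained hm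
    have hqlen' : q.length = m + 1 := by have := hq.2.length_pos; omega
    have hqlast : q.getD m f1 = z := by
      have h0 := hq.2.getD_last; rwa [hqlen] at h0
    have hiL : i < L := by
      rcases Nat.lt_or_ge i L with h | h
      · exact h
      have hiL' : i = L := by omega
      have huv : z = v := by rw [hz, hiL']; exact hlast
      have h1 : g.lv i z = g.lv L v := by rw [hiL', huv]
      rw [← hLlv, hm] at h1
      have : m = L := by exact_mod_cast h1
      omega
    by_cases hX : ∃ a, a ≤ m ∧ ∃ jj, i < jj ∧ jj ≤ L ∧ q.getD a f1 = p.getD jj f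
    · -- q meets p strictly after position i
      obtain ⟨ha1m, j, hij, hjL, hw⟩ := Nat.find_spec hX
      set a1 := Nat.find hX with ha1def
      have hmin : ∀ s, s < a1 → ∀ k, i < k → k ≤ L → q.getD s f1 ≠ p.getD k f := by
        intro s hs k h1 h2 heq
        exact Nat.find_min hX (show s < Nat.find hX by omega) ⟨by omega, k, h1, h2, heq⟩
      have ha1m' : a1 < m := by
        rcases Nat.lt_or_ge a1 m with h | h
        · exact h
        have h0 : a1 = m := by omega
        rw [h0, hqlast, hz] at hw
        have := hpf.2.getD_inj (s := i) (t := j) (by omega) (by omega) hw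
        omega
      have hdis1 : ∀ s k, s ≤ a1 → i < k → k ≤ L → q.getD s f1 = p.getD k f →
          s = a1 ∧ k = j := by
        intro s k hs h1 h2 heq
        rcases Nat.lt_or_ge s a1 with h | h
        · exact absurd heq (hmin s h k h1 h2)
        · have hsa : s = a1 := by omega
          have h3 : p.getD k f = p.getD j f := by rw [← heq, hsa]; exact hw
          have := hpf.2.getD_inj (by omega) (by omega) h3
          exact ⟨hsa, this⟩
      by_cases hpar1 : a1 % 2 = j % 2
      · -- shorter path of the same parity to v : contradiction
        have hsp := g.splice_up (a := a1) (j := j) (e := L) hpf.2 hq (by omega) (by omega)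
          (by omega) hw hpar1
          (by intro s k hs h1 h2 heq
              have := hdis1 s k hs (by omega) h2 heq
              omega)
        rw [hlast, g.lv_congr (show (a1 + (L - j)) % 2 = L % 2 by omega) v, ← hLlv] at hsp
        have : L ≤ a1 + (L - j) := by exact_mod_cast hsp
        omega
      · -- opposite-parity path to z, then tenacity forces a short opposite path to v
        have hdisd : ∀ s k, s ≤ a1 → i ≤ k → k < j → q.getD s f1 ≠ p.getD k f := by
          intro s k hs h1 h2 heq
          rcases Nat.eq_or_lt_of_le h1 with h3 | h3
          · rw [← h3, ← hz, ← hqlast] at heq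
            have := hq.2.getD_inj (s := s) (t := m) (by omega) (by omega) heq
            omega
          · have := hdis1 s k hs h3 (by omega) heq
            omega
        have hsp := g.splice_down (a := a1) (j := j) (e := i) hpf.2 hq (by omega) (by omega)
          (by omega) hw (by omega) hdisd
        rw [← hz] at hsp
        have hten : g.tenacity z ≤ ((m + (a1 + (j - i)) : ℕ) : ℕ∞) := by
          rw [g.tenacity_lv i z, hm]
          push_cast
          refine add_le_add le_rfl ?_
          rw [g.lv_congr (show (i + 1) % 2 = (a1 + (j - i)) % 2 by omega) z]
          exact hsp
        have htv := le_trans ht hten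
        rw [g.tenacity_lv L v, ← hLlv] at htv
        have hLtop : g.lv (L + 1) v ≠ ⊤ := by
          intro htop; rw [htop, add_top, top_le_iff] at htv
          exact absurd htv (ENat.coe_ne_top _)
        obtain ⟨l2, hl2⟩ := MatchedGraph.exists_nat_of_ne_top hLtop
        rw [hl2] at htv
        have harith : L + l2 ≤ m + (a1 + (j - i)) := by exact_mod_cast htv
        obtain ⟨P, f2, hP, hPlen, hPpar⟩ := g.lv_attained hl2
        have hPlen' : P.length = l2 + 1 := by have := hP.2.length_pos; omega
        have hPlast : P.getD l2 f2 = v := by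
          have h0 := hP.2.getD_last; rwa [hPlen] at h0
        have hl2i : l2 < i := by omega
        by_cases hY : ∃ a, a ≤ l2 ∧ ∃ k, i ≤ k ∧ k < L ∧ P.getD a f2 = p.getD k f
        · obtain ⟨ha2l, j2, hij2, hj2L, hw2⟩ := Nat.find_spec hY
          set a2 := Nat.find hY with ha2def
          have hmin2 : ∀ s, s < a2 → ∀ k, i ≤ k → k < L → P.getD s f2 ≠ p.getD k f := by
            intro s hs k h1 h2 heq
            exact Nat.find_min hY (show s < Nat.find hY by omega) ⟨by omega, k, h1, h2, heq⟩
          have ha2l' : a2 < l2 := by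
            rcases Nat.lt_or_ge a2 l2 with h | h
            · exact h
            have h0 : a2 = l2 := by omega
            rw [h0, hPlast] at hw2
            have h3 : p.getD L f = p.getD j2 f := by rw [hlast]; exact hw2
            have := hpf.2.getD_inj (s := L) (t := j2) (by omega) (by omega) h3
            omega
          have hdis2 : ∀ s k, s ≤ a2 → i ≤ k → k < L → P.getD s f2 = p.getD k f →
              s = a2 ∧ k = j2 := by
            intro s k hs h1 h2 heq
            rcases Nat.lt_or_ge s a2 with h | h
            · exact absurd heq (hmin2 s h k h1 h2)
            · have hsa : s = a2 := by omega
              have h3 : p.getD k f = p.getD j2 f := by rw [← heq, hsa]; exact hw2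
              have := hpf.2.getD_inj (by omega) (by omega) h3
              exact ⟨hsa, this⟩
          by_cases hpar2 : a2 % 2 = j2 % 2
          · have hsp2 := g.splice_up (a := a2) (j := j2) (e := L) hpf.2 hP (by omega) (by omega)
              (by omega) hw2 hpar2
              (by intro s k hs h1 h2 heq
                  rcases Nat.lt_or_ge k L with h | h
                  · have := hdis2 s k hs (by omega) h heq
                    omega
                  · have hkL : k = L := by omega
                    rw [hkL, hlast, ← hPlast] at heq
                    have := hP.2.getD_inj (s := s) (t := l2) (by omega) (by omega) heq
                    omega)
            rw [hlast, g.lv_congr (show (a2 + (L - j2)) % 2 = L % 2 by omega) v, ← hLlv] at hsp2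
            have : L ≤ a2 + (L - j2) := by exact_mod_cast hsp2
            omega
          · have hsp2 := g.splice_down (a := a2) (j := j2) (e := i) hpf.2 hP (by omega) (by omega)
              (by omega) hw2 (by omega)
              (by intro s k hs h1 h2 heq
                  have := hdis2 s k hs h1 (by omega) heq
                  omega)
            rw [← hz] at hsp2
            have hten2 : g.tenacity z ≤ ((m + (a2 + (j2 - i)) : ℕ) : ℕ∞) := by
              rw [g.tenacity_lv i z, hm]
              push_cast
              refine add_le_add le_rfl ?_
              rw [g.lv_congr (show (i + 1) % 2 = (a2 + (j2 - i)) % 2 by omega) z]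
              exact hsp2
            have hcon := le_trans ht hten2
            rw [g.tenacity_lv L v, ← hLlv, hl2] at hcon
            have : L + l2 ≤ m + (a2 + (j2 - i)) := by exact_mod_cast hcon
            omega
        · -- P avoids p[i..L-1] : direct tenacity contradiction
          have hsp2 := g.splice_down (a := l2) (j := L) (e := i) hpf.2 hP (by omega) (by omega)
            (by omega) (by rw [hPlast, hlast]) (by omega)
            (by intro s k hs h1 h2 heq
                exact hY ⟨s, by omega, k, h1, h2, heq⟩)
          rw [← hz] at hsp2
          have hten2 : g.tenacity z ≤ ((m + (l2 + (L - i)) : ℕ) : ℕ∞) := by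
            rw [g.tenacity_lv i z, hm]
            push_cast
            refine add_le_add le_rfl ?_
            rw [g.lv_congr (show (i + 1) % 2 = (l2 + (L - i)) % 2 by omega) z]
            exact hsp2
          have hcon := le_trans ht hten2
          rw [g.tenacity_lv L v, ← hLlv, hl2] at hcon
          have : L + l2 ≤ m + (l2 + (L - i)) := by exact_mod_cast hcon
          omega
    · -- q avoids p strictly after i : shorter same-parity path to v
      have hsp := g.splice_up (a := m) (j := i) (e := L) hpf.2 hq (by omega) (by omega)
        (by omega) (hqlast.trans hz) (by omega)
        (by intro s k hs h1 h2 heq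
            exact hX ⟨s, hs, k, h1, h2, heq⟩)
      rw [hlast, g.lv_congr (show (m + (L - i)) % 2 = L % 2 by omega) v, ← hLlv] at hsp
      have : L ≤ m + (L - i) := by exact_mod_cast hsp
      omega
  constructor
  · intro hev
    have h0 : i % 2 = 0 := Nat.even_iff.mp hev
    rw [g.lv_even h0 z] at hkey
    exact hkey
  · intro hod
    have h1 : i % 2 = 1 := Nat.odd_iff.mp hod
    rw [g.lv_odd h1 z] at hkey
    exact hkey
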